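/- arXiv:1411.6497 — 6 statements merged into one kernel-verified Lean document; each statement's English description precedes it below -/
import Mathlib

section
/- Let L be an algebraic lattice and let (φ_i)_{i∈I} be a family of algebraic (finitary) closure operators on L. Define μ : L → L by μ(x) = ⨆ over all finite sequences (j₁,…,j_k) with entries in I (including the empty sequence, which contributes x) of φ_{j₁}(φ_{j₂}(⋯φ_{j_k}(x)⋯)). Then μ is finitary: μ(x) = ⨆ {μ(k) : k compact, k ≤ x} for all x ∈ L. -/
/-- A closure operator on a complete lattice: extensive, idempotent and isotone. -/
def IsClosureOp {L : Type*} [CompleteLattice L] (φ : L → L) : Prop :=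
  (∀ x, x ≤ φ x) ∧ (∀ x, φ (φ x) = φ x) ∧ (∀ x y : L, x ≤ y → φ x ≤ φ y)

/-- A map on a complete lattice is finitary if its value at `x` is the sup of its
values at the compact elements below `x`. -/
def Finitary {L : Type*} [CompleteLattice L] (φ : L → L) : Prop :=
  ∀ x : L, φ x = ⨆ k ∈ {k : L | IsCompactElement k ∧ k ≤ x}, φ k

/-- The composite `φ_{j₁} ∘ φ_{j₂} ∘ ⋯ ∘ φ_{j_k}` indexed by a finite sequence
`j = (j₁, …, j_k)`; the empty sequence gives the identity. -/
def seqComp {L : Type*} {I : Type*} (φ : I → L → L) (j : List I) : L → L :=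
  (j.map φ).foldr (· ∘ ·) id

lemma isCompactElement_bot' {L : Type*} [CompleteLattice L] :
    IsCompactElement (⊥ : L) := (CompleteLattice.isCompactElement_iff_exists_le_sSup_of_le_sSup L _).mpr fun s _ =>
  ⟨∅, by simp⟩

lemma isCompactElement_sup' {L : Type*} [CompleteLattice L] {a b : L}
    (ha : IsCompactElement a) (hb : IsCompactElement b) :
    IsCompactElement (a ⊔ b) := by
  classical
  rw [CompleteLattice.isCompactElement_iff_exists_le_sSup_of_le_sSup] at ha hb ⊢
  intro s hs
  obtain ⟨ta, hta, ha'⟩ := ha s (le_trans le_sup_left hs)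
  obtain ⟨tb, htb, hb'⟩ := hb s (le_trans le_sup_right hs)
  refine ⟨ta ∪ tb, ?_, ?_⟩
  · intro x hx; rcases Finset.mem_union.mp hx with h | h
    · exact hta h
    · exact htb h
  · exact sup_le (ha'.trans (Finset.sup_mono Finset.subset_union_left))
      (hb'.trans (Finset.sup_mono Finset.subset_union_right))

/-- For a family of algebraic closure operators `φ_i` on an algebraic lattice,
the map `μ x = ⨆_{finite sequences j in I} φ_{j₁}(φ_{j₂}(⋯ φ_{j_k}(x)⋯))`
(the empty sequence contributing `x`) is finitary. -/
theorem mu_finitary {L : Type*} [CompleteLattice L] [IsCompactlyGenerated L]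
    {I : Type*} (φ : I → L → L)
    (hco : ∀ i, IsClosureOp (φ i)) (hfin : ∀ i, Finitary (φ i)) :
    Finitary (fun x : L => ⨆ j : List I, seqComp φ j x) := by
  classical
  set S : L → Set L := fun x => {k : L | IsCompactElement k ∧ k ≤ x} with hS
  have hcons : ∀ (i : I) (j : List I) (x : L), seqComp φ (i :: j) x = φ i (seqComp φ j x) :=
    fun _ _ _ => rfl
  have hmono : ∀ j : List I, Monotone (seqComp φ j) := by
    intro j
    induction j with
    | nil => exact monotone_id
    | cons i j ih => exact fun a b h => (hco i).2.2 _ _ (ih h)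
  have hfin' : ∀ (j : List I) (x : L), seqComp φ j x = ⨆ k ∈ S x, seqComp φ j k := by
    intro j
    induction j with
    | nil =>
      intro x
      have : seqComp φ ([] : List I) = id := rfl
      rw [this]
      simpa [hS] using (sSup_compact_le_eq x).symm.trans (sSup_eq_iSup)
    | cons i j ih =>
      intro x
      apply le_antisymm
      · rw [hcons]
        rw [hfin i (seqComp φ j x)]
        apply iSup₂_le
        intro c hc
        -- c is compact and c ≤ seqComp φ j x = sSup (seqComp φ j '' S x)
        have hsup : seqComp φ j x = sSup (seqComp φ j '' S x) := by
          rw [ih x, sSup_image]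
        have hdir : DirectedOn (· ≤ ·) (seqComp φ j '' S x) := by
          rintro _ ⟨k₁, hk₁, rfl⟩ _ ⟨k₂, hk₂, rfl⟩
          refine ⟨seqComp φ j (k₁ ⊔ k₂), ⟨k₁ ⊔ k₂,
            ⟨isCompactElement_sup' hk₁.1 hk₂.1, sup_le hk₁.2 hk₂.2⟩, rfl⟩,
            hmono j le_sup_left, hmono j le_sup_right⟩
        have hne : (seqComp φ j '' S x).Nonempty :=
          ⟨seqComp φ j ⊥, ⟨⊥, ⟨isCompactElement_bot', bot_le⟩, rfl⟩⟩
        obtain ⟨y, ⟨k, hkS, rfl⟩, hcy⟩ :=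
          (CompleteLattice.isCompactElement_iff_le_of_directed_sSup_le L c).mp hc.1
            (seqComp φ j '' S x) hne hdir (hsup ▸ hc.2)
        calc φ i c ≤ φ i (seqComp φ j k) := (hco i).2.2 _ _ hcy
          _ = seqComp φ (i :: j) k := (hcons i j k).symm
          _ ≤ ⨆ k ∈ S x, seqComp φ (i :: j) k := le_iSup₂ (f := fun k _ => seqComp φ (i :: j) k) k hkS
      · exact iSup₂_le fun k hk => hmono (i :: j) hk.2
  intro x
  apply le_antisymm
  · apply iSup_le
    intro j
    rw [hfin' j x]
    apply iSup₂_le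
    intro k hk
    calc seqComp φ j k ≤ ⨆ j' : List I, seqComp φ j' k := le_iSup (fun j' : List I => seqComp φ j' k) j
      _ ≤ ⨆ k ∈ S x, ⨆ j' : List I, seqComp φ j' k :=
          le_iSup₂ (f := fun k _ => ⨆ j' : List I, seqComp φ j' k) k hk
  · exact iSup₂_le fun k hk => iSup_le fun j =>
      le_trans (hmono j hk.2) (le_iSup (fun j => seqComp φ j x) j)
end

section
/- Let L be an algebraic lattice and let (φ_i)_{i∈I} be a family of algebraic (finitary) closure operators on L. Define μ : L → L by μ(x) = ⨆ over all finite sequences (j₁,…,j_k) with entries in I (including the empty sequence, which contributes x) of φ_{j₁}(φ_{j₂}(⋯φ_{j_k}(x)⋯)). Then μ is an algebraic closure operator, φ_i(x) ≤ μ(x) for every i ∈ I and x ∈ L, and for every closure operator ρ on L with φ_i(x) ≤ ρ(x) for all i ∈ I and x ∈ L one has μ(x) ≤ ρ(x) for all x ∈ L. That is, μ is the join of the family (φ_i) in the lattice of closure operators on L, and this join is itself algebraic. -/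
section Aux
variable {L : Type*} [CompleteLattice L] {I : Type*} (φ : I → L → L)

@[simp] lemma seqComp_nil (x : L) : seqComp φ [] x = x := rfl

@[simp] lemma seqComp_cons (i : I) (j : List I) (x : L) :
    seqComp φ (i :: j) x = φ i (seqComp φ j x) := rfl

lemma isCompact_bot' : IsCompactElement (⊥ : L) := by
  classical
  simpa using CompleteLattice.isCompactElement_finsetSup (f := id) (∅ : Finset L) (by simp)

lemma isCompact_sup' {a b : L} (ha : IsCompactElement a)
    (hb : IsCompactElement b) :
    IsCompactElement (a ⊔ b) := by
  classical
  have := CompleteLattice.isCompactElement_finsetSup (f := id) ({a, b} : Finset L)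
    (by rintro y hy
        simp only [Finset.mem_insert, Finset.mem_singleton] at hy
        rcases hy with rfl | rfl <;> assumption)
  simpa using this

variable (hco : ∀ i, IsClosureOp (φ i))
include hco

lemma seqComp_mono (j : List I) {x y : L} (h : x ≤ y) : seqComp φ j x ≤ seqComp φ j y := by
  induction j with
  | nil => exact h
  | cons i j ih => exact (hco i).2.2 _ _ ih

lemma le_seqComp (j : List I) (x : L) : x ≤ seqComp φ j x := by
  induction j with
  | nil => exact le_rfl
  | cons i j ih => exact ih.trans ((hco i).1 _)

omit hco in
lemma seqComp_append (j₁ j₂ : List I) (x : L) :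
    seqComp φ (j₁ ++ j₂) x = seqComp φ j₁ (seqComp φ j₂ x) := by
  induction j₁ with
  | nil => rfl
  | cons i j ih => simp [ih]

lemma seqComp_append_le (j₁ j₂ : List I) (x : L) :
    seqComp φ j₁ x ≤ seqComp φ (j₁ ++ j₂) x := by
  rw [seqComp_append]
  exact seqComp_mono φ hco j₁ (le_seqComp φ hco j₂ x)

lemma seqComp_le_append (j₁ j₂ : List I) (x : L) :
    seqComp φ j₂ x ≤ seqComp φ (j₁ ++ j₂) x := by
  rw [seqComp_append]
  exact le_seqComp φ hco j₁ _

/-- The key lemma: a compact element below `seqComp φ j x` is already below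
`seqComp φ j k` for some compact `k ≤ x`. -/
lemma compact_le_seqComp (hfin : ∀ i, Finitary (φ i)) (j : List I) {x c : L}
    (hc : IsCompactElement c) (hcx : c ≤ seqComp φ j x) :
    ∃ k : L, IsCompactElement k ∧ k ≤ x ∧ c ≤ seqComp φ j k := by
  induction j generalizing c with
  | nil => exact ⟨c, hc, hcx, le_rfl⟩
  | cons i j ih =>
    simp only [seqComp_cons] at hcx
    set S : Set L := {d | IsCompactElement d ∧ d ≤ seqComp φ j x} with hS
    have hsub : c ≤ sSup ((φ i) '' S) := by
      rw [hfin i (seqComp φ j x)] at hcx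
      rw [sSup_image]; exact hcx
    have hne : ((φ i) '' S).Nonempty := by
      exact ⟨φ i ⊥, ⟨⊥, ⟨isCompact_bot', bot_le⟩, rfl⟩⟩
    have hdir : DirectedOn (· ≤ ·) ((φ i) '' S) := by
      rintro _ ⟨a, ⟨ha, hax⟩, rfl⟩ _ ⟨b, ⟨hb, hbx⟩, rfl⟩
      exact ⟨φ i (a ⊔ b), ⟨a ⊔ b, ⟨isCompact_sup' ha hb, sup_le hax hbx⟩, rfl⟩,
        (hco i).2.2 _ _ le_sup_left, (hco i).2.2 _ _ le_sup_right⟩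
    obtain ⟨_, ⟨d, ⟨hd, hdx⟩, rfl⟩, hcd⟩ :=
      (CompleteLattice.isCompactElement_iff_le_of_directed_sSup_le L c).mp hc _ hne hdir hsub
    obtain ⟨k, hk, hkx, hdk⟩ := ih hd hdx
    exact ⟨k, hk, hkx, hcd.trans ((hco i).2.2 _ _ hdk)⟩

end Aux

/-- For a family of algebraic closure operators `φ_i` on an algebraic lattice,
the map `μ x = ⨆_{finite sequences j in I} φ_{j₁}(φ_{j₂}(⋯ φ_{j_k}(x)⋯))` is an
algebraic closure operator, it is an upper bound of the family, and it is below
every closure operator that is an upper bound of the family; i.e. `μ` is the join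
of the family in the lattice of closure operators, and this join is algebraic. -/
theorem mu_is_join {L : Type*} [CompleteLattice L] [IsCompactlyGenerated L]
    {I : Type*} (φ : I → L → L)
    (hco : ∀ i, IsClosureOp (φ i)) (hfin : ∀ i, Finitary (φ i)) :
    IsClosureOp (fun x : L => ⨆ j : List I, seqComp φ j x) ∧
    Finitary (fun x : L => ⨆ j : List I, seqComp φ j x) ∧
    (∀ (i : I) (x : L), φ i x ≤ ⨆ j : List I, seqComp φ j x) ∧
    (∀ ρ : L → L, IsClosureOp ρ → (∀ (i : I) (x : L), φ i x ≤ ρ x) →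
      ∀ x : L, (⨆ j : List I, seqComp φ j x) ≤ ρ x) := by
  set μ : L → L := fun x => ⨆ j : List I, seqComp φ j x with hμ
  have hext : ∀ x : L, x ≤ μ x := fun x => le_iSup (fun j => seqComp φ j x) []
  have hmono : ∀ x y : L, x ≤ y → μ x ≤ μ y := fun x y h =>
    iSup_mono fun j => seqComp_mono φ hco j h
  -- directedness of the family j ↦ seqComp φ j x
  have hdirx : ∀ x : L, DirectedOn (· ≤ ·) (Set.range fun j : List I => seqComp φ j x) := by
    intro x
    rintro _ ⟨j₁, rfl⟩ _ ⟨j₂, rfl⟩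
    exact ⟨seqComp φ (j₁ ++ j₂) x, ⟨j₁ ++ j₂, rfl⟩,
      seqComp_append_le φ hco j₁ j₂ x, seqComp_le_append φ hco j₁ j₂ x⟩
  -- each φ i maps below μ x
  have hstep : ∀ (i : I) (x : L), φ i (μ x) ≤ μ x := by
    intro i x
    rw [hfin i (μ x)]
    refine iSup₂_le fun k hk => ?_
    obtain ⟨hkc, hkx⟩ := hk
    have : k ≤ sSup (Set.range fun j : List I => seqComp φ j x) := by
      rwa [sSup_range]
    obtain ⟨_, ⟨j, rfl⟩, hkj⟩ :=
      (CompleteLattice.isCompactElement_iff_le_of_directed_sSup_le L k).mp hkc _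
        (Set.range_nonempty _) (hdirx x) this
    calc φ i k ≤ φ i (seqComp φ j x) := (hco i).2.2 _ _ hkj
    _ = seqComp φ (i :: j) x := rfl
    _ ≤ μ x := le_iSup (fun j => seqComp φ j x) (i :: j)
  have hseqstep : ∀ (j : List I) (x : L), seqComp φ j (μ x) ≤ μ x := by
    intro j x
    induction j with
    | nil => exact le_rfl
    | cons i j ih => exact le_trans ((hco i).2.2 _ _ ih) (hstep i x)
  have hidem : ∀ x : L, μ (μ x) = μ x := fun x =>
    le_antisymm (iSup_le fun j => hseqstep j x) (hext (μ x))
  refine ⟨⟨hext, hidem, hmono⟩, ?_, ?_, ?_⟩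
  · -- Finitary
    intro x
    apply le_antisymm
    · refine iSup_le fun j => ?_
      conv_lhs => rw [← sSup_compact_le_eq (seqComp φ j x)]
      refine sSup_le fun c hc => ?_
      obtain ⟨k, hk, hkx, hck⟩ := compact_le_seqComp φ hco hfin j hc.1 hc.2
      refine le_trans hck <| le_trans (le_iSup (fun j => seqComp φ j k) j) ?_
      exact le_iSup₂_of_le k ⟨hk, hkx⟩ le_rfl
    · exact iSup₂_le fun k hk => hmono _ _ hk.2
  · -- upper bound
    intro i x
    exact le_iSup (fun j => seqComp φ j x) [i]
  · -- least upper bound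
    rintro ρ ⟨hρe, hρi, hρm⟩ hub x
    refine iSup_le fun j => ?_
    induction j with
    | nil => exact hρe x
    | cons i j ih =>
      calc φ i (seqComp φ j x) ≤ ρ (seqComp φ j x) := hub i _
      _ ≤ ρ (ρ x) := hρm _ _ ih
      _ = ρ x := hρi x
end

section
/- Let L be an algebraic lattice and let (σ_ψ)_{ψ∈Ψ} be a family of algebraic (finitary) closure operators on L that is directed under the pointwise order (any two members have a common upper bound in the family). Then the pointwise supremum x ↦ ⨆_{ψ∈Ψ} σ_ψ(x) is itself an algebraic closure operator and equals the join of the family: for every closure operator τ on L with σ_ψ(x) ≤ τ(x) for all ψ and x, one has ⨆_{ψ∈Ψ} σ_ψ(x) ≤ τ(x) for all x. -/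
/-- The pointwise supremum of a (nonempty) pointwise-directed family of algebraic
closure operators on an algebraic lattice is an algebraic closure operator, and
it is the join of the family: it is below every closure operator that is an upper
bound of the family. -/
theorem directed_sup_aco {L : Type*} [CompleteLattice L] [IsCompactlyGenerated L]
    {Ψ : Type*} [Nonempty Ψ] (σ : Ψ → L → L) (hdir : Directed (· ≤ ·) σ)
    (hco : ∀ ψ, IsClosureOp (σ ψ)) (hfin : ∀ ψ, Finitary (σ ψ)) :
    IsClosureOp (fun x : L => ⨆ ψ, σ ψ x) ∧
    Finitary (fun x : L => ⨆ ψ, σ ψ x) ∧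
    ∀ τ : L → L, IsClosureOp τ → (∀ (ψ : Ψ) (x : L), σ ψ x ≤ τ x) →
      ∀ x : L, (⨆ ψ, σ ψ x) ≤ τ x := by
  set φ : L → L := fun x => ⨆ ψ, σ ψ x with hφ
  have hext : ∀ x, x ≤ φ x := fun x =>
    le_trans ((hco (Classical.arbitrary Ψ)).1 x) (le_iSup (fun ψ => σ ψ x) _)
  have hmono : ∀ x y : L, x ≤ y → φ x ≤ φ y := fun x y h =>
    iSup_mono fun ψ => (hco ψ).2.2 x y h
  -- key: a compact element below φ x is below some σ ψ' x
  have hkey : ∀ x : L, ∀ k : L, IsCompactElement k → k ≤ φ x →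
      ∃ ψ', k ≤ σ ψ' x := by
    intro x k hk hkx
    have hd : DirectedOn (· ≤ ·) (Set.range fun ψ => σ ψ x) := by
      rintro _ ⟨a, rfl⟩ _ ⟨b, rfl⟩
      obtain ⟨c, hac, hbc⟩ := hdir a b
      exact ⟨σ c x, ⟨c, rfl⟩, hac x, hbc x⟩
    obtain ⟨_, ⟨ψ', rfl⟩, hle⟩ :=
      (CompleteLattice.isCompactElement_iff_le_of_directed_sSup_le L k).mp hk
        (Set.range fun ψ => σ ψ x) (Set.range_nonempty _) hd
        (by rw [sSup_range]; exact hkx)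
    exact ⟨ψ', hle⟩
  have hidem : ∀ x, φ (φ x) = φ x := by
    intro x
    refine le_antisymm ?_ (hmono _ _ (hext x))
    refine iSup_le fun ψ => ?_
    rw [hfin ψ (φ x)]
    refine iSup₂_le fun k hk => ?_
    obtain ⟨ψ', hψ'⟩ := hkey x k hk.1 hk.2
    obtain ⟨c, hc1, hc2⟩ := hdir ψ ψ'
    calc σ ψ k ≤ σ c k := hc1 k
      _ ≤ σ c (σ ψ' x) := (hco c).2.2 _ _ hψ'
      _ ≤ σ c (σ c x) := (hco c).2.2 _ _ (hc2 x)
      _ = σ c x := (hco c).2.1 x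
      _ ≤ φ x := le_iSup (fun ψ => σ ψ x) c
  refine ⟨⟨hext, hidem, hmono⟩, ?_, ?_⟩
  · intro x
    refine le_antisymm ?_ (iSup₂_le fun k hk => hmono _ _ hk.2)
    refine iSup_le fun ψ => ?_
    rw [hfin ψ x]
    refine iSup₂_le fun k hk => le_trans (le_iSup (fun ψ => σ ψ k) ψ) ?_
    exact le_iSup₂ (f := fun k _ => φ k) k hk
  · intro τ _ hub x
    exact iSup_le fun ψ => hub ψ x
end

section
/- Let L be an algebraic lattice, let a, b, v ∈ L with a compact, and define φ^v_{a,b} : L → L by φ^v_{a,b}(x) = x ⊔ v ⊔ b if a ≤ x ⊔ v, and φ^v_{a,b}(x) = x ⊔ v otherwise. Then φ^v_{a,b} is finitary, i.e. φ^v_{a,b}(x) = ⨆ {φ^v_{a,b}(k) : k compact, k ≤ x} for all x ∈ L; hence it is an algebraic closure operator. -/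
open scoped Classical in
/-- The operator `φ^v_{a,b}` sending `x` to `x ⊔ v ⊔ b` when `a ≤ x ⊔ v`, and to
`x ⊔ v` otherwise. -/
noncomputable def phiV {L : Type*} [CompleteLattice L] (v a b : L) (x : L) : L :=
  if a ≤ x ⊔ v then x ⊔ v ⊔ b else x ⊔ v

lemma phiV_le_phiV {L : Type*} [CompleteLattice L] (v a b : L) {x y : L} (h : x ≤ y) :
    phiV v a b x ≤ phiV v a b y := by
  classical
  unfold phiV
  split_ifs with h1 h2 h2
  · gcongr
  · exact absurd (h1.trans (sup_le_sup_right h v)) h2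
  · exact (sup_le_sup_right h v).trans le_sup_left
  · exact sup_le_sup_right h v

lemma le_phiV {L : Type*} [CompleteLattice L] (v a b x : L) : x ⊔ v ≤ phiV v a b x := by
  unfold phiV; split_ifs <;> simp

/-- If `a` is compact in an algebraic lattice then `φ^v_{a,b}` is finitary, hence
an algebraic closure operator. -/
theorem phiV_finitary {L : Type*} [CompleteLattice L] [IsCompactlyGenerated L]
    (a b v : L) (ha : IsCompactElement a) :
    Finitary (phiV v a b) ∧ IsClosureOp (phiV v a b) := by
  classical
  constructor
  · intro x
    set T : Set L := {k : L | IsCompactElement k ∧ k ≤ x} with hT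
    set S : L := ⨆ k ∈ T, phiV v a b k with hS
    refine le_antisymm ?_ (iSup₂_le fun k hk => phiV_le_phiV v a b hk.2)
    have hmem : ∀ k ∈ T, phiV v a b k ≤ S := fun k hk => le_iSup₂ (f := fun k _ => phiV v a b k) k hk
    have hbot : (⊥ : L) ∈ T := ⟨isCompactElement_bot', bot_le⟩
    have hv : v ≤ S := le_trans (le_sup_right.trans (le_phiV v a b ⊥)) (hmem ⊥ hbot)
    have hx : x ≤ S := by
      conv_lhs => rw [← sSup_compact_le_eq x]
      exact sSup_le fun c hc => le_trans (le_sup_left.trans (le_phiV v a b c)) (hmem c hc)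
    unfold phiV
    split_ifs with h1
    · have hax : a ≤ sSup (insert v T) := by
        rw [sSup_insert, sSup_compact_le_eq x]
        exact h1.trans (sup_comm x v ▸ le_refl _)
      obtain ⟨F, hFsub, hFle⟩ := (CompleteLattice.isCompactElement_iff_exists_le_sSup_of_le_sSup (k := a)).mp ha _ hax
      set G := F.filter (fun c => c ∈ T) with hG
      set k0 := G.sup id with hk0
      have hk0T : k0 ∈ T := by
        constructor
        · exact CompleteLattice.isCompactElement_finsetSup G (fun c hc => ((Finset.mem_filter.mp hc).2).1)
        · exact Finset.sup_le fun c hc => ((Finset.mem_filter.mp hc).2).2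
      have hak0 : a ≤ k0 ⊔ v := by
        refine hFle.trans (Finset.sup_le fun c hc => ?_)
        by_cases hcT : c ∈ T
        · exact le_trans (Finset.le_sup (f := id) (Finset.mem_filter.mpr ⟨hc, hcT⟩)) le_sup_left
        · have : c = v := by
            rcases hFsub hc with h | h
            · exact h
            · exact absurd h hcT
          simp [this]
      have hb : b ≤ S := by
        refine le_trans ?_ (hmem k0 hk0T)
        unfold phiV
        rw [if_pos hak0]
        exact le_sup_right
      exact sup_le (sup_le hx hv) hb
    · exact sup_le hx hv
  · refine ⟨fun x => le_sup_left.trans (le_phiV v a b x), fun x => ?_, fun x y h => phiV_le_phiV v a b h⟩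
    unfold phiV
    split_ifs with h1 h2 h2
    · exact le_antisymm
        (sup_le (sup_le le_rfl (le_sup_right.trans le_sup_left)) le_sup_right)
        (le_sup_left.trans le_sup_left)
    · exact absurd (h1.trans (le_sup_left.trans le_sup_left)) h2
    · exact absurd (by simpa [sup_assoc] using h2) h1
    · simp [sup_assoc]
end

section
/- Let L be an algebraic lattice, let a, b, v ∈ L all be compact, and define φ^v_{a,b} : L → L by φ^v_{a,b}(x) = x ⊔ v ⊔ b if a ≤ x ⊔ v, and φ^v_{a,b}(x) = x ⊔ v otherwise. Then φ^v_{a,b} is a compact element of the complete lattice of algebraic closure operators on L; equivalently, φ^v_{a,b} is join-inaccessible: for every family (σ_ψ)_{ψ∈Ψ} of algebraic closure operators on L directed under the pointwise order and satisfying φ^v_{a,b}(x) = ⨆_{ψ∈Ψ} σ_ψ(x) for all x ∈ L, there exists ψ ∈ Ψ with σ_ψ = φ^v_{a,b}. -/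
/-- If `a`, `b` and `v` are all compact in an algebraic lattice `L`, then
`φ^v_{a,b}` is a compact element of the complete lattice of algebraic closure
operators on `L`, i.e. it is join-inaccessible: any (nonempty) pointwise-directed
family of algebraic closure operators whose pointwise supremum is `φ^v_{a,b}`
contains `φ^v_{a,b}`. -/
theorem phiV_compact {L : Type*} [CompleteLattice L] [IsCompactlyGenerated L]
    (a b v : L) (ha : IsCompactElement a)
    (hb : IsCompactElement b)
    (hv : IsCompactElement v) :
    ∀ (Ψ : Type*) (_ : Nonempty Ψ) (σ : Ψ → L → L), Directed (· ≤ ·) σ →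
      (∀ ψ, IsClosureOp (σ ψ) ∧ Finitary (σ ψ)) →
      (∀ x : L, phiV v a b x = ⨆ ψ, σ ψ x) →
      ∃ ψ, σ ψ = phiV v a b := by
  intro Ψ hne σ hdir hcl hsup
  -- each σ ψ is below φ pointwise
  have hle : ∀ ψ (x : L), σ ψ x ≤ phiV v a b x := by
    intro ψ x
    rw [hsup x]
    exact le_iSup (fun ψ => σ ψ x) ψ
  -- helper: extract a witness from a compact element below a pointwise supremum
  have key : ∀ (c x : L), IsCompactElement c →
      c ≤ phiV v a b x → ∃ ψ, c ≤ σ ψ x := by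
    intro c x hc hcx
    have hdir' : DirectedOn (· ≤ ·) (Set.range fun ψ => σ ψ x) := by
      rintro _ ⟨ψ₁, rfl⟩ _ ⟨ψ₂, rfl⟩
      obtain ⟨ψ₃, h₁, h₂⟩ := hdir ψ₁ ψ₂
      exact ⟨σ ψ₃ x, ⟨ψ₃, rfl⟩, h₁ x, h₂ x⟩
    have hne' : (Set.range fun ψ => σ ψ x).Nonempty := Set.range_nonempty _
    have hcle : c ≤ sSup (Set.range fun ψ => σ ψ x) := by
      rw [sSup_range]; rw [hsup x] at hcx; exact hcx
    obtain ⟨y, ⟨ψ, rfl⟩, hy⟩ :=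
      (CompleteLattice.isCompactElement_iff_le_of_directed_sSup_le L c).mp hc
        _ hne' hdir' hcle
    exact ⟨ψ, hy⟩
  -- v ≤ σ ψ₀ ⊥
  have hv0 : v ≤ phiV v a b ⊥ := by
    unfold phiV; split_ifs <;> simp
  obtain ⟨ψ₀, hψ₀⟩ := key v ⊥ hv hv0
  -- b ≤ σ ψ₁ a
  have hba : b ≤ phiV v a b a := by
    unfold phiV; rw [if_pos le_sup_left]; exact le_sup_right
  obtain ⟨ψ₁, hψ₁⟩ := key b a hb hba
  obtain ⟨ψ₂, h₀₂, h₁₂⟩ := hdir ψ₀ ψ₁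
  obtain ⟨⟨hext, hidem, hiso⟩, -⟩ := hcl ψ₂
  -- v ≤ σ ψ₂ x for any x
  have hvx : ∀ x : L, v ≤ σ ψ₂ x := fun x =>
    hψ₀.trans ((h₀₂ ⊥).trans (hiso ⊥ x bot_le))
  refine ⟨ψ₂, funext fun x => le_antisymm (hle ψ₂ x) ?_⟩
  unfold phiV
  split_ifs with h
  · -- a ≤ x ⊔ v, need x ⊔ v ⊔ b ≤ σ ψ₂ x
    have hxv : x ⊔ v ≤ σ ψ₂ x := sup_le (hext x) (hvx x)
    have hax : a ≤ σ ψ₂ x := h.trans hxv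
    have hbx : b ≤ σ ψ₂ x := by
      calc b ≤ σ ψ₂ a := hψ₁.trans (h₁₂ a)
        _ ≤ σ ψ₂ (σ ψ₂ x) := hiso a _ hax
        _ = σ ψ₂ x := hidem x
    exact sup_le hxv hbx
  · exact sup_le (hext x) (hvx x)
end

section
/- Let L be an algebraic lattice and let σ be an algebraic (finitary) closure operator on L. Set v = σ(⊥), and for a, b ∈ L define φ^v_{a,b} : L → L by φ^v_{a,b}(x) = x ⊔ v ⊔ b if a ≤ x ⊔ v, and φ^v_{a,b}(x) = x ⊔ v otherwise. Then for every x ∈ L, σ(x) = ⨆ {φ^v_{a,b}(x) : a compact in L, b compact, b ≤ σ(a)}; that is, σ is the (pointwise) join of the family of operators φ^v_{a,b} indexed by compact a and compact b ≤ σ(a). -/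
/-- Every algebraic closure operator `σ` on an algebraic lattice is the pointwise
join, with `v = σ ⊥`, of the operators `φ^v_{a,b}` over all compact `a` and all
compact `b ≤ σ a`. -/
theorem aco_eq_sup_phiV {L : Type*} [CompleteLattice L] [IsCompactlyGenerated L]
    (σ : L → L) (hσ : IsClosureOp σ) (hfin : Finitary σ) :
    ∀ x : L, σ x =
      ⨆ p ∈ {p : L × L | IsCompactElement p.1 ∧
          IsCompactElement p.2 ∧ p.2 ≤ σ p.1},
        phiV (σ ⊥) p.1 p.2 x := by
  obtain ⟨hext, hidem, hmono⟩ := hσ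
  intro x
  have hvx : x ⊔ σ ⊥ ≤ σ x := sup_le (hext x) (hmono ⊥ x bot_le)
  apply le_antisymm
  · -- σ x ≤ sup
    rw [hfin x]
    apply iSup₂_le
    rintro k ⟨hk, hkx⟩
    -- σ k is sup of compact elements below it
    rw [← sSup_compact_le_eq (σ k)]
    apply sSup_le
    rintro b ⟨hb, hbk⟩
    have hmem : (k, b) ∈ {p : L × L | IsCompactElement p.1 ∧
        IsCompactElement p.2 ∧ p.2 ≤ σ p.1} := ⟨hk, hb, hbk⟩
    refine le_trans ?_ (le_iSup₂ (f := fun p _ => phiV (σ ⊥) p.1 p.2 x) (k, b) hmem)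
    simp only [phiV]
    rw [if_pos (le_trans hkx le_sup_left)]
    exact le_sup_right
  · apply iSup₂_le
    rintro ⟨a, b⟩ ⟨ha, hb, hba⟩
    simp only [phiV]
    split_ifs with h
    · refine sup_le hvx ?_
      calc b ≤ σ a := hba
        _ ≤ σ (σ x) := hmono _ _ (h.trans hvx)
        _ = σ x := hidem x
    · exact hvx
end
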